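/- Upper bound for solutions: under the hypotheses of the positivity theorem (f' (t) = β̃·f(t)·(1 − β*·f(t) − γ*·f(t−1)) for t > 0, f = φ > 0 continuous on [−1,0], β* + γ* = 1, β*, γ*, β̃ > 0), the solution satisfies for all t > 0: 0 < f(t) < f₀ / (β*·f₀ + (1 − β*·f₀)·exp(−β̃·t)), where f₀ = f(0). In particular f(t) < max{f₀, 1/β*}. -/

import Mathlib

open Real Set

theorem stmt_17 (βt βs γs : ℝ) (hβt : 0 < βt) (hβs : 0 < βs) (hγs : 0 < γs)
    (hsum : βs + γs = 1)
    (φ f : ℝ → ℝ)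
    (hφcont : ContinuousOn φ (Set.Icc (-1 : ℝ) 0))
    (hφpos : ∀ t ∈ Set.Icc (-1 : ℝ) 0, 0 < φ t)
    (hfcont : ContinuousOn f (Set.Ici (-1 : ℝ)))
    (hde : ∀ t : ℝ, 0 < t →
      HasDerivAt f (βt * f t * (1 - βs * f t - γs * f (t - 1))) t)
    (hinit : ∀ t ∈ Set.Icc (-1 : ℝ) 0, f t = φ t) :
    ∀ t : ℝ, 0 < t →
      (0 < f t ∧
        f t < f 0 / (βs * f 0 + (1 - βs * f 0) * Real.exp (-βt * t)) ∧
        f t < max (f 0) (1 / βs)) := by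
  have hf0 : 0 < f 0 := by
    rw [hinit 0 (by norm_num)]
    exact hφpos 0 (by norm_num)
  -- positivity of f on [-1, ∞)
  have hpos : ∀ t : ℝ, -1 ≤ t → 0 < f t := by
    intro t₀ ht₀
    by_contra h
    push_neg at h
    have ht0pos : 0 < t₀ := by
      by_contra h'
      push_neg at h'
      have := hφpos t₀ ⟨ht₀, h'⟩
      rw [hinit t₀ ⟨ht₀, h'⟩] at h
      linarith
    -- bound on f on [-1, t₀]
    obtain ⟨C, hC⟩ := (isCompact_Icc (a := (-1:ℝ)) (b := t₀)).exists_bound_of_continuousOn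
      (hfcont.mono (fun x hx => hx.1))
    set B : ℝ := max C 1 with hB
    have hB1 : (1:ℝ) ≤ B := le_max_right _ _
    have hCB : C ≤ B := le_max_left _ _
    have hfB : ∀ x ∈ Icc (-1:ℝ) t₀, |f x| ≤ B := by
      intro x hx
      calc |f x| = ‖f x‖ := rfl
        _ ≤ C := hC x hx
        _ ≤ B := hCB
    set K : ℝ := βt * B with hK
    -- the set where f ≤ 0
    set S : Set ℝ := Icc 0 t₀ ∩ f ⁻¹' Iic 0 with hS
    have hSne : S.Nonempty := ⟨t₀, ⟨le_of_lt ht0pos, le_refl _⟩, h⟩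
    have hSclosed : IsClosed S := by
      have : ContinuousOn f (Icc 0 t₀) := hfcont.mono (fun x hx => by
        simp only [mem_Ici]; linarith [hx.1])
      exact this.preimage_isClosed_of_isClosed isClosed_Icc isClosed_Iic
    have hSbdd : BddBelow S := ⟨0, fun x hx => hx.1.1⟩
    set s : ℝ := sInf S with hs
    have hsS : s ∈ S := hSclosed.csInf_mem hSne hSbdd
    have hfs : f s ≤ 0 := hsS.2
    have hs0 : 0 ≤ s := hsS.1.1
    have hst : s ≤ t₀ := hsS.1.2
    have hspos : 0 < s := by
      rcases lt_or_eq_of_le hs0 with h' | h'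
      · exact h'
      · rw [← h'] at hfs; linarith
    -- f > 0 on [0, s)
    have hfIco : ∀ x ∈ Ico (0:ℝ) s, 0 < f x := by
      intro x hx
      by_contra hx'
      push_neg at hx'
      have : x ∈ S := ⟨⟨hx.1, le_trans (le_of_lt hx.2) hst⟩, hx'⟩
      exact absurd (csInf_le hSbdd this) (not_le.mpr hx.2)
    -- H = f · exp(K·) is monotone on [0, s]
    set H : ℝ → ℝ := fun x => f x * Real.exp (K * x) with hH
    have hHd : ∀ x ∈ Ioo (0:ℝ) s, HasDerivAt H
        ((βt * f x * (1 - βs * f x - γs * f (x - 1))) * Real.exp (K * x)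
          + f x * (Real.exp (K * x) * K)) x := by
      intro x hx
      exact (hde x hx.1).mul (((hasDerivAt_id x).const_mul K).exp.congr_deriv (by simp))
    have hmono : MonotoneOn H (Icc 0 s) := by
      apply monotoneOn_of_deriv_nonneg (convex_Icc 0 s)
      · apply ContinuousOn.mul
        · exact hfcont.mono (fun x hx => by simp only [mem_Ici]; linarith [hx.1])
        · exact (Real.continuous_exp.comp (continuous_const.mul continuous_id)).continuousOn
      · rw [interior_Icc]
        intro x hx
        exact (hHd x hx).differentiableAt.differentiableWithinAt
      · rw [interior_Icc]
        intro x hx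
        rw [(hHd x hx).deriv]
        have hfx : 0 < f x := hfIco x ⟨le_of_lt hx.1, hx.2⟩
        have hfxB : |f x| ≤ B := hfB x ⟨by linarith [hx.1], by linarith [hx.2]⟩
        have hfx1B : |f (x - 1)| ≤ B := hfB (x - 1) ⟨by linarith [hx.1], by linarith [hx.2]⟩
        have he : 0 < Real.exp (K * x) := Real.exp_pos _
        have h1 : f x ≤ B := le_of_abs_le hfxB
        have h2 : f (x - 1) ≤ B := le_of_abs_le hfx1B
        have hfac : 1 - βs * f x - γs * f (x - 1) ≥ -B := by nlinarith
        have key : βt * f x * (1 - βs * f x - γs * f (x - 1)) * Real.exp (K * x)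
            + f x * (Real.exp (K * x) * K)
            = Real.exp (K * x) * (f x * (βt * (1 - βs * f x - γs * f (x - 1)) + K)) := by
          rw [hK]; ring
        rw [key]
        apply mul_nonneg he.le
        apply mul_nonneg hfx.le
        rw [hK]
        nlinarith
    have := hmono (left_mem_Icc.mpr (le_of_lt hspos)) (right_mem_Icc.mpr (le_of_lt hspos))
      (le_of_lt hspos)
    simp only [hH, mul_zero, Real.exp_zero, mul_one] at this
    nlinarith [Real.exp_pos (K * s)]
  -- main bound
  intro t ht
  have hft : 0 < f t := hpos t (by linarith)
  refine ⟨hft, ?_⟩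
  -- G = (1/f - βs) · exp(βt ·) is strictly monotone on [0, t]
  set G : ℝ → ℝ := fun x => ((f x)⁻¹ - βs) * Real.exp (βt * x) with hG
  have hGd : ∀ x ∈ Ioo (0:ℝ) t, HasDerivAt G
      ((-(βt * f x * (1 - βs * f x - γs * f (x - 1))) / (f x) ^ 2) * Real.exp (βt * x)
        + ((f x)⁻¹ - βs) * (Real.exp (βt * x) * βt)) x := by
    intro x hx
    have hfx : 0 < f x := hpos x (by linarith [hx.1])
    exact (((hde x hx.1).inv hfx.ne').sub_const βs).mul
      (((hasDerivAt_id x).const_mul βt).exp.congr_deriv (by simp))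
  have hGmono : StrictMonoOn G (Icc 0 t) := by
    apply strictMonoOn_of_deriv_pos (convex_Icc 0 t)
    · apply ContinuousOn.mul
      · apply ContinuousOn.sub _ continuousOn_const
        apply ContinuousOn.inv₀
        · exact hfcont.mono (fun x hx => by simp only [mem_Ici]; linarith [hx.1])
        · intro x hx
          exact (hpos x (by linarith [hx.1])).ne'
      · exact (Real.continuous_exp.comp (continuous_const.mul continuous_id)).continuousOn
    · rw [interior_Icc]
      intro x hx
      rw [(hGd x hx).deriv]
      have hfx : 0 < f x := hpos x (by linarith [hx.1])
      have hfx1 : 0 < f (x - 1) := hpos (x - 1) (by linarith [hx.1])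
      have he : 0 < Real.exp (βt * x) := Real.exp_pos _
      have key : (-(βt * f x * (1 - βs * f x - γs * f (x - 1))) / (f x) ^ 2) * Real.exp (βt * x)
          + ((f x)⁻¹ - βs) * (Real.exp (βt * x) * βt)
          = Real.exp (βt * x) * βt * γs * f (x - 1) / f x := by
        field_simp
        ring
      rw [key]
      positivity
  have hGlt : G 0 < G t := hGmono (left_mem_Icc.mpr (le_of_lt ht))
    (right_mem_Icc.mpr (le_of_lt ht)) ht
  simp only [hG, mul_zero, Real.exp_zero, mul_one] at hGlt
  set X : ℝ := Real.exp (-βt * t) with hX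
  have hX0 : 0 < X := Real.exp_pos _
  have hX1 : X < 1 := by
    rw [hX]
    apply Real.exp_lt_one_iff.mpr
    nlinarith
  have hXE : Real.exp (βt * t) * X = 1 := by
    rw [hX, ← Real.exp_add]
    norm_num
  have hinv0 : 0 < (f 0)⁻¹ := inv_pos.mpr hf0
  set R : ℝ := βs + ((f 0)⁻¹ - βs) * X with hR
  have hinv : R < (f t)⁻¹ := by
    have h1 : ((f 0)⁻¹ - βs) * X < ((f t)⁻¹ - βs) * Real.exp (βt * t) * X :=
      (mul_lt_mul_iff_left₀ hX0).mpr hGlt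
    have h2 : ((f t)⁻¹ - βs) * Real.exp (βt * t) * X = (f t)⁻¹ - βs := by
      rw [mul_assoc, hXE, mul_one]
    rw [h2] at h1
    rw [hR]
    linarith
  have hRpos : 0 < R := by
    have h' : R = βs * (1 - X) + (f 0)⁻¹ * X := by rw [hR]; ring
    rw [h']
    nlinarith
  have hmain : f t < 1 / R := by
    rw [lt_div_iff₀ hRpos]
    calc f t * R < f t * (f t)⁻¹ := (mul_lt_mul_iff_right₀ hft).mpr hinv
      _ = 1 := mul_inv_cancel₀ hft.ne'
  have hff : f 0 * (f 0)⁻¹ = 1 := mul_inv_cancel₀ hf0.ne'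
  have hDR : f 0 * R = βs * f 0 + (1 - βs * f 0) * X := by
    rw [hR]
    linear_combination X * hff
  have hD2pos : 0 < βs * f 0 + (1 - βs * f 0) * X := by
    rw [← hDR]
    exact mul_pos hf0 hRpos
  have hRe : f 0 / (βs * f 0 + (1 - βs * f 0) * X) = 1 / R := by
    rw [div_eq_div_iff hD2pos.ne' hRpos.ne']
    rw [← hDR]
    ring
  have hbound : f t < f 0 / (βs * f 0 + (1 - βs * f 0) * X) := by
    rw [hRe]; exact hmain
  refine ⟨hbound, ?_⟩
  rcases le_or_gt (βs * f 0) 1 with hc | hc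
  · have hle : f 0 / (βs * f 0 + (1 - βs * f 0) * X) ≤ 1 / βs := by
      rw [div_le_div_iff₀ hD2pos hβs]
      nlinarith
    exact lt_of_lt_of_le hbound (le_trans hle (le_max_right _ _))
  · have hle : f 0 / (βs * f 0 + (1 - βs * f 0) * X) ≤ f 0 := by
      rw [div_le_iff₀ hD2pos]
      nlinarith
    exact lt_of_lt_of_le hbound (le_trans hle (le_max_left _ _))
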